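/- arXiv:1603.03196 — 7 statements merged into one kernel-verified Lean document; each statement's English description precedes it below -/
import Mathlib

section
/- Let u, v : {0,...,N} → ℝ be two grid functions with u_0 = v_0 and u_N = v_N, and suppose f : ℝ → ℝ is nondecreasing and both satisfy the discrete semilinear equation (L_h w)_i = f(w_i) for all 1 ≤ i ≤ N-1. Then u = v. -/
lemma stmt_3_aux (N : ℕ) (h : ℝ) (hh : 0 < h)
    (f : ℝ → ℝ) (hf : Monotone f) (u v : ℕ → ℝ)
    (hb0 : u 0 = v 0) (hbN : u N = v N)
    (hu : ∀ i, 1 ≤ i → i < N → (u (i - 1) - 2 * u i + u (i + 1)) / h ^ 2 = f (u i))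
    (hv : ∀ i, 1 ≤ i → i < N → (v (i - 1) - 2 * v i + v (i + 1)) / h ^ 2 = f (v i)) :
    ∀ i ≤ N, u i ≤ v i := by
  set w : ℕ → ℝ := fun i => u i - v i with hw
  have hex : ∃ i, i ≤ N ∧ ∀ j ≤ N, w j ≤ w i := by
    obtain ⟨i, hi, hmax⟩ := Finset.exists_max_image (Finset.Icc 0 N) w ⟨0, by simp⟩
    exact ⟨i, by simpa using hi, fun j hj => hmax j (by simpa)⟩
  set i0 := Nat.find hex with hi0def
  obtain ⟨hi0N, hmax⟩ := Nat.find_spec hex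
  rw [← hi0def] at hi0N hmax
  have key : w i0 ≤ 0 := by
    by_contra hpos
    push_neg at hpos
    have hw0 : w 0 = 0 := by simp [hw, hb0]
    have hwN : w N = 0 := by simp [hw, hbN]
    have hi01 : 1 ≤ i0 := by
      rcases Nat.eq_zero_or_pos i0 with h0 | h1
      · rw [h0, hw0] at hpos; linarith
      · exact h1
    have hi0ltN : i0 < N := by
      rcases lt_or_eq_of_le hi0N with hlt | heq
      · exact hlt
      · rw [heq, hwN] at hpos; linarith
    -- minimality: w (i0 - 1) < w i0
    have hlt : w (i0 - 1) < w i0 := by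
      have hmin := Nat.find_min hex (show i0 - 1 < i0 by omega)
      push_neg at hmin
      obtain ⟨j, hjN, hj⟩ := hmin (by omega)
      exact lt_of_lt_of_le hj (hmax j hjN)
    have hle : w (i0 + 1) ≤ w i0 := hmax (i0 + 1) (by omega)
    have h2 : (0:ℝ) < h ^ 2 := by positivity
    have heu := hu i0 hi01 hi0ltN
    have hev := hv i0 hi01 hi0ltN
    have hfle : f (v i0) ≤ f (u i0) := hf (by simp [hw] at hpos; linarith)
    have hdiff : 0 ≤ (w (i0 - 1) - 2 * w i0 + w (i0 + 1)) / h ^ 2 := by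
      have : (w (i0 - 1) - 2 * w i0 + w (i0 + 1)) / h ^ 2
          = f (u i0) - f (v i0) := by
        simp only [hw]
        rw [← heu, ← hev]
        ring
      rw [this]; linarith
    have hnum : 0 ≤ w (i0 - 1) - 2 * w i0 + w (i0 + 1) := by
      by_contra hneg
      push_neg at hneg
      have := div_neg_of_neg_of_pos hneg h2
      linarith
    linarith
  intro i hi
  have := hmax i hi
  simp only [hw] at this key ⊢
  linarith

theorem stmt_3 (N : ℕ) (hN : 2 ≤ N) (h : ℝ) (hh : 0 < h)
    (f : ℝ → ℝ) (hf : Monotone f) (u v : ℕ → ℝ)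
    (hb0 : u 0 = v 0) (hbN : u N = v N)
    (hu : ∀ i, 1 ≤ i → i < N → (u (i - 1) - 2 * u i + u (i + 1)) / h ^ 2 = f (u i))
    (hv : ∀ i, 1 ≤ i → i < N → (v (i - 1) - 2 * v i + v (i + 1)) / h ^ 2 = f (v i)) :
    ∀ i ≤ N, u i = v i := by
  intro i hi
  have h1 := stmt_3_aux N h hh f hf u v hb0 hbN hu hv i hi
  have h2 := stmt_3_aux N h hh f hf v u hb0.symm hbN.symm hv hu i hi
  linarith
end

section
/- Let u, v : {0,...,N} → ℝ with u_i = v_i for i ∈ {0, N}, and let f : ℝ → ℝ be nondecreasing. Suppose (L_h u)_i ≤ f(u_i) and (L_h v)_i ≥ f(v_i) for all interior i (u is a discrete supersolution, v a discrete subsolution). Then v_i ≤ u_i for all i. -/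
theorem stmt_4 (N : ℕ) (hN : 2 ≤ N) (h : ℝ) (hh : 0 < h)
    (f : ℝ → ℝ) (hf : Monotone f) (u v : ℕ → ℝ)
    (hb0 : u 0 = v 0) (hbN : u N = v N)
    (hu : ∀ i, 1 ≤ i → i < N → (u (i - 1) - 2 * u i + u (i + 1)) / h ^ 2 ≤ f (u i))
    (hv : ∀ i, 1 ≤ i → i < N → f (v i) ≤ (v (i - 1) - 2 * v i + v (i + 1)) / h ^ 2) :
    ∀ i ≤ N, v i ≤ u i := by
  set w : ℕ → ℝ := fun j => v j - u j with hwdef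
  have hne : (Finset.Icc 0 N).Nonempty := ⟨0, by simp⟩
  obtain ⟨j, hjmem, hjmax⟩ := Finset.exists_max_image (Finset.Icc 0 N) w hne
  set M : ℝ := w j with hMdef
  have hmax : ∀ b ≤ N, w b ≤ M := by
    intro b hb
    exact hjmax b (by simp [hb])
  have hw0 : w 0 = 0 := by simp [hwdef, hb0]
  have hwN : w N = 0 := by simp [hwdef, hbN]
  -- It suffices to show M ≤ 0
  suffices hM0 : M ≤ 0 by
    intro i hi
    have := hmax i hi
    simp only [hwdef] at this
    linarith
  by_contra hMpos
  push_neg at hMpos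
  have hex : ∃ k, k ≤ N ∧ w k = M := ⟨j, by simpa using hjmem, rfl⟩
  set k := Nat.find hex with hkdef
  obtain ⟨hkN, hkM⟩ := Nat.find_spec hex
  rw [← hkdef] at hkN hkM
  have hk1 : 1 ≤ k := by
    rcases Nat.eq_zero_or_pos k with h0 | h1
    · rw [h0, hw0] at hkM; linarith
    · exact h1
  have hkltN : k < N := by
    rcases lt_or_eq_of_le hkN with h0 | h1
    · exact h0
    · rw [h1, hwN] at hkM; linarith
  have hpos : (0:ℝ) < h ^ 2 := by positivity
  have huv : u k ≤ v k := by
    have : w k = v k - u k := rfl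
    linarith [hkM ▸ this, hMpos]
  have key : (u (k - 1) - 2 * u k + u (k + 1)) / h ^ 2
      ≤ (v (k - 1) - 2 * v k + v (k + 1)) / h ^ 2 :=
    le_trans (hu k hk1 hkltN) (le_trans (hf huv) (hv k hk1 hkltN))
  have key2 : u (k - 1) - 2 * u k + u (k + 1) ≤ v (k - 1) - 2 * v k + v (k + 1) :=
    (div_le_div_iff_of_pos_right hpos).mp key
  have hwk1 : w (k - 1) ≤ M := hmax (k - 1) (le_trans (Nat.sub_le _ _) hkN)
  have hwk2 : w (k + 1) ≤ M := hmax (k + 1) hkltN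
  have hweq : w (k - 1) = M := by
    have h1 : w (k - 1) = v (k - 1) - u (k - 1) := rfl
    have h2 : w (k + 1) = v (k + 1) - u (k + 1) := rfl
    have h3 : w k = v k - u k := rfl
    rw [h3] at hkM
    rw [h1] at hwk1 ⊢
    rw [h2] at hwk2
    linarith
  have hlt : k - 1 < k := Nat.sub_lt hk1 one_pos
  exact Nat.find_min hex hlt ⟨le_trans (Nat.sub_le _ _) hkN, hweq⟩
end

section
/- Let f₁, f₂ : ℝ → ℝ be nondecreasing with f₁(0) = f₂(0) = 0. If w, v : {0,...,N} → ℝ both solve the discrete min-max equation min(-(L_h u)_i + f₁(u_i), max(-(L_h u)_i - f₂(-u_i), u_i)) = 0 for all interior i with the same boundary values w_0 = v_0 and w_N = v_N, then w = v. -/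
lemma aux_comp (N : ℕ) (h : ℝ) (hh : 0 < h)
    (f₁ f₂ : ℝ → ℝ) (hf₁ : Monotone f₁) (hf₂ : Monotone f₂)
    (w v : ℕ → ℝ) (hb0 : w 0 = v 0) (hbN : w N = v N)
    (hw : ∀ i, 1 ≤ i → i < N →
      min (-((w (i - 1) - 2 * w i + w (i + 1)) / h ^ 2) + f₁ (w i))
        (max (-((w (i - 1) - 2 * w i + w (i + 1)) / h ^ 2) - f₂ (-(w i))) (w i)) = 0)
    (hv : ∀ i, 1 ≤ i → i < N →
      min (-((v (i - 1) - 2 * v i + v (i + 1)) / h ^ 2) + f₁ (v i))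
        (max (-((v (i - 1) - 2 * v i + v (i + 1)) / h ^ 2) - f₂ (-(v i))) (v i)) = 0) :
    ∀ i ≤ N, w i ≤ v i := by
  classical
  by_contra hcon
  push_neg at hcon
  obtain ⟨k, hkN, hk⟩ := hcon
  set d : ℕ → ℝ := fun i => w i - v i with hd
  have hex : ∃ i, i ≤ N ∧ ∀ j ≤ N, d j ≤ d i := by
    obtain ⟨i, hi, hm⟩ := Finset.exists_max_image (Finset.range (N + 1)) d ⟨0, by simp⟩
    exact ⟨i, Nat.lt_succ_iff.mp (Finset.mem_range.mp hi),
      fun j hj => hm j (Finset.mem_range.mpr (Nat.lt_succ_of_le hj))⟩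
  set i₀ := Nat.find hex with hi₀def
  obtain ⟨hiN, hmax⟩ := Nat.find_spec hex
  have hM : 0 < d i₀ := lt_of_lt_of_le (by simp [hd]; linarith) (hmax k hkN)
  have hd0 : d 0 = 0 := by simp [hd, hb0]
  have hdN : d N = 0 := by simp [hd, hbN]
  have hi0 : 1 ≤ i₀ := by
    rcases Nat.eq_zero_or_pos i₀ with h0 | h0
    · rw [h0] at hM; rw [hd0] at hM; exact absurd hM (lt_irrefl 0)
    · exact h0
  have hiltN : i₀ < N := by
    rcases lt_or_eq_of_le hiN with h0 | h0
    · exact h0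
    · rw [hi₀def, h0, hdN] at hM; exact absurd hM (lt_irrefl 0)
  -- strict inequality at i₀ - 1 (minimality of i₀)
  have hpred : d (i₀ - 1) < d i₀ := by
    have hlt : i₀ - 1 < i₀ := Nat.sub_lt hi0 one_pos
    have hnot := Nat.find_min hex hlt
    push_neg at hnot
    obtain ⟨j, hjN, hj⟩ := hnot (le_trans (Nat.sub_le _ _) hiN)
    exact lt_of_lt_of_le hj (hmax j hjN)
  have hsucc : d (i₀ + 1) ≤ d i₀ := hmax (i₀ + 1) (Nat.succ_le_of_lt hiltN)
  have hwi := hw i₀ hi0 hiltN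
  have hvi := hv i₀ hi0 hiltN
  set A := -((w (i₀ - 1) - 2 * w i₀ + w (i₀ + 1)) / h ^ 2) with hA
  set B := -((v (i₀ - 1) - 2 * v i₀ + v (i₀ + 1)) / h ^ 2) with hB
  have hp : (0:ℝ) < h ^ 2 := by positivity
  have hBA : B < A := by
    rw [hA, hB, neg_div', neg_div', div_lt_div_iff₀ hp hp]
    have h1 : w (i₀ - 1) - v (i₀ - 1) < w i₀ - v i₀ := hpred
    have h2 : w (i₀ + 1) - v (i₀ + 1) ≤ w i₀ - v i₀ := hsucc
    nlinarith
  have hwv : v i₀ < w i₀ := by have := hM; simpa [hd] using this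
  have hXw : 0 ≤ A + f₁ (w i₀) := by
    calc (0:ℝ) = _ := hwi.symm
    _ ≤ A + f₁ (w i₀) := min_le_left _ _
  have hYw : 0 ≤ max (A - f₂ (-(w i₀))) (w i₀) := by
    calc (0:ℝ) = _ := hwi.symm
    _ ≤ _ := min_le_right _ _
  have hXv : 0 ≤ B + f₁ (v i₀) := by
    calc (0:ℝ) = _ := hvi.symm
    _ ≤ B + f₁ (v i₀) := min_le_left _ _
  have hYv : 0 ≤ max (B - f₂ (-(v i₀))) (v i₀) := by
    calc (0:ℝ) = _ := hvi.symm
    _ ≤ _ := min_le_right _ _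
  have hf1 : f₁ (v i₀) ≤ f₁ (w i₀) := hf₁ (le_of_lt hwv)
  rcases min_cases (A + f₁ (w i₀)) (max (A - f₂ (-(w i₀))) (w i₀)) with ⟨heq, _⟩ | ⟨heq, _⟩
  · -- A + f₁ (w i₀) = 0
    rw [heq] at hwi
    linarith
  · -- max(A - f₂(-w i₀), w i₀) = 0
    rw [heq] at hwi
    have hw1 : A - f₂ (-(w i₀)) ≤ 0 := hwi ▸ le_max_left _ _
    have hw2 : w i₀ ≤ 0 := hwi ▸ le_max_right _ _
    rcases le_max_iff.mp hYv with hc | hc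
    · have hf2 : f₂ (-(w i₀)) ≤ f₂ (-(v i₀)) := hf₂ (by linarith)
      linarith
    · linarith

theorem stmt_7 (N : ℕ) (hN : 2 ≤ N) (h : ℝ) (hh : 0 < h)
    (f₁ f₂ : ℝ → ℝ) (hf₁ : Monotone f₁) (hf₂ : Monotone f₂)
    (hf₁0 : f₁ 0 = 0) (hf₂0 : f₂ 0 = 0)
    (w v : ℕ → ℝ) (hb0 : w 0 = v 0) (hbN : w N = v N)
    (hw : ∀ i, 1 ≤ i → i < N →
      min (-((w (i - 1) - 2 * w i + w (i + 1)) / h ^ 2) + f₁ (w i))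
        (max (-((w (i - 1) - 2 * w i + w (i + 1)) / h ^ 2) - f₂ (-(w i))) (w i)) = 0)
    (hv : ∀ i, 1 ≤ i → i < N →
      min (-((v (i - 1) - 2 * v i + v (i + 1)) / h ^ 2) + f₁ (v i))
        (max (-((v (i - 1) - 2 * v i + v (i + 1)) / h ^ 2) - f₂ (-(v i))) (v i)) = 0) :
    ∀ i ≤ N, w i = v i := by
  intro i hi
  exact le_antisymm
    (aux_comp N h hh f₁ f₂ hf₁ hf₂ w v hb0 hbN hw hv i hi)
    (aux_comp N h hh f₁ f₂ hf₁ hf₂ v w hb0.symm hbN.symm hv hw i hi)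
end

section
/- Fix m ≥ 2 and a finite index set of interior grid points. Suppose the m-tuple of grid functions (w¹,...,wᵐ), each nonnegative on interior points, satisfies at every interior grid point α the fixed-point system w^l_α = max( -f_l(w^l_α) h²/4 + w̄^l_α - ∑_{p≠l} w̄^p_α , 0 ) for l = 1,...,m, where w̄^l_α denotes the average of w^l over the neighbours of α and f_l ≥ 0. Then the supports are disjoint: for every interior α and every pair p ≠ q, w^p_α · w^q_α = 0. -/
/-- Average of a 2D grid function over the four neighbours of `(i,j)` (5-point stencil). -/
noncomputable def nbrAvg (w : ℕ → ℕ → ℝ) (i j : ℕ) : ℝ :=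
  (w (i - 1) j + w (i + 1) j + w i (j - 1) + w i (j + 1)) / 4

theorem stmt_8 (m N : ℕ) (hm : 2 ≤ m) (hN : 2 ≤ N) (h : ℝ) (hh : 0 < h)
    (f : Fin m → ℝ → ℝ) (hf : ∀ l s, 0 ≤ s → 0 ≤ f l s)
    (w : Fin m → ℕ → ℕ → ℝ)
    (hwpos : ∀ l i j, i ≤ N → j ≤ N → 0 ≤ w l i j)
    (hfix : ∀ (l : Fin m) i j, 1 ≤ i → i < N → 1 ≤ j → j < N →
      w l i j = max (-(f l (w l i j)) * h ^ 2 / 4 + nbrAvg (w l) i j -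
        ∑ p ∈ Finset.univ \ {l}, nbrAvg (w p) i j) 0) :
    ∀ i j, 1 ≤ i → i < N → 1 ≤ j → j < N →
      ∀ p q : Fin m, p ≠ q → w p i j * w q i j = 0 := by
  intro i j hi1 hiN hj1 hjN p q hpq
  by_contra hne
  -- both factors are positive
  have hiN' : i ≤ N := le_of_lt hiN
  have hjN' : j ≤ N := le_of_lt hjN
  have hwp : 0 < w p i j := by
    rcases lt_or_eq_of_le (hwpos p i j hiN' hjN') with h' | h'
    · exact h'
    · exact absurd (by rw [← h']; ring) hne
  have hwq : 0 < w q i j := by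
    rcases lt_or_eq_of_le (hwpos q i j hiN' hjN') with h' | h'
    · exact h'
    · exact absurd (by rw [← h']; ring) hne
  -- nonnegativity of neighbour averages
  have havg : ∀ l : Fin m, 0 ≤ nbrAvg (w l) i j := by
    intro l
    unfold nbrAvg
    have h1 := hwpos l (i-1) j (le_trans (Nat.sub_le i 1) hiN') hjN'
    have h2 := hwpos l (i+1) j hiN hjN'
    have h3 := hwpos l i (j-1) hiN' (le_trans (Nat.sub_le j 1) hjN')
    have h4 := hwpos l i (j+1) hiN' hjN
    linarith
  -- positive branch bound for a positive component
  have key : ∀ (l r : Fin m), l ≠ r → 0 < w l i j →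
      w l i j ≤ nbrAvg (w l) i j - nbrAvg (w r) i j := by
    intro l r hlr hpos
    have heq := hfix l i j hi1 hiN hj1 hjN
    set A := -(f l (w l i j)) * h ^ 2 / 4 + nbrAvg (w l) i j -
        ∑ p ∈ Finset.univ \ {l}, nbrAvg (w p) i j with hA
    have hAw : w l i j = A := by
      rcases le_or_gt A 0 with hA0 | hA0
      · exfalso; rw [heq, max_eq_right hA0] at hpos; exact lt_irrefl _ hpos
      · rw [heq, max_eq_left (le_of_lt hA0)]
    have hsum : nbrAvg (w r) i j ≤ ∑ p ∈ Finset.univ \ {l}, nbrAvg (w p) i j := by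
      apply Finset.single_le_sum (f := fun p => nbrAvg (w p) i j)
      · intro x _; exact havg x
      · simp [Finset.mem_sdiff, Ne.symm hlr]
    have hfnn : 0 ≤ f l (w l i j) := hf l _ (le_of_lt hpos)
    have hh2 : 0 ≤ f l (w l i j) * h ^ 2 / 4 := by positivity
    rw [hAw, hA]
    linarith
  have h1 := key p q hpq hwp
  have h2 := key q p (Ne.symm hpq) hwq
  linarith
end

section
/- Consider the 2D iteration on a uniform grid: for each species l = 1,...,m, (u^l_α)^{(k+1)} = max( -f_l((u^l_α)^{(k)}) h²/4 + (ū^l_α)^{(k)} - ∑_{p≠l} (ū^p_α)^{(k)}, 0 ) at interior points, with fixed nonnegative boundary values (u^l_α)^{(k)} = φ^l_α on the boundary for all k, initialized at 0 in the interior. Assume f_l(s) ≥ 0 for all s ≥ 0. Then for every k and every grid point α, 0 ≤ (u^l_α)^{(k)} ≤ max_β φ^l_β. -/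
theorem stmt_10 (m N : ℕ) (hm : 1 ≤ m) (hN : 2 ≤ N) (h : ℝ) (hh : 0 < h)
    (f : Fin m → ℝ → ℝ) (hf : ∀ l s, 0 ≤ s → 0 ≤ f l s)
    (φ : Fin m → ℕ → ℕ → ℝ) (hφ : ∀ l i j, 0 ≤ φ l i j)
    (u : ℕ → Fin m → ℕ → ℕ → ℝ)
    (hbdry : ∀ k (l : Fin m) i j, i ≤ N → j ≤ N →
      (i = 0 ∨ i = N ∨ j = 0 ∨ j = N) → u k l i j = φ l i j)
    (hinit : ∀ (l : Fin m) i j, 1 ≤ i → i < N → 1 ≤ j → j < N → u 0 l i j = 0)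
    (hiter : ∀ k (l : Fin m) i j, 1 ≤ i → i < N → 1 ≤ j → j < N →
      u (k + 1) l i j = max (-(f l (u k l i j)) * h ^ 2 / 4 + nbrAvg (u k l) i j -
        ∑ p ∈ Finset.univ \ {l}, nbrAvg (u k p) i j) 0) :
    ∀ k (l : Fin m) i j, i ≤ N → j ≤ N →
      0 ≤ u k l i j ∧
      u k l i j ≤ ((Finset.range (N + 1)) ×ˢ (Finset.range (N + 1))).sup'
        ⟨(0, 0), by simp⟩ (fun p => φ l p.1 p.2) := by
  set M : Fin m → ℝ := fun l => ((Finset.range (N + 1)) ×ˢ (Finset.range (N + 1))).sup'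
      ⟨(0, 0), by simp⟩ (fun p => φ l p.1 p.2) with hM
  have hφM : ∀ (l : Fin m) i j, i ≤ N → j ≤ N → φ l i j ≤ M l := by
    intro l i j hi hj
    exact Finset.le_sup' (f := fun p => φ l p.1 p.2)
      (by simp only [Finset.mem_product, Finset.mem_range]; omega : ((i, j) : ℕ × ℕ) ∈ Finset.range (N+1) ×ˢ Finset.range (N+1))
  have hM0 : ∀ l, 0 ≤ M l := fun l => (hφ l 0 0).trans (hφM l 0 0 (by omega) (by omega))
  intro k
  induction k with
  | zero =>
    intro l i j hi hj
    by_cases hb : i = 0 ∨ i = N ∨ j = 0 ∨ j = N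
    · rw [hbdry 0 l i j hi hj hb]; exact ⟨hφ l i j, hφM l i j hi hj⟩
    · push_neg at hb
      rw [hinit l i j (by omega) (by omega) (by omega) (by omega)]
      exact ⟨le_refl 0, hM0 l⟩
  | succ k ih =>
    intro l i j hi hj
    by_cases hb : i = 0 ∨ i = N ∨ j = 0 ∨ j = N
    · rw [hbdry _ l i j hi hj hb]; exact ⟨hφ l i j, hφM l i j hi hj⟩
    · push_neg at hb
      obtain ⟨hi1, hiN, hj1, hjN⟩ : 1 ≤ i ∧ i < N ∧ 1 ≤ j ∧ j < N := by omega
      rw [hiter k l i j hi1 hiN hj1 hjN]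
      have hnbr0 : ∀ p : Fin m, 0 ≤ nbrAvg (u k p) i j := by
        intro p
        have h1 := (ih p (i - 1) j (by omega) hj).1
        have h2 := (ih p (i + 1) j (by omega) hj).1
        have h3 := (ih p i (j - 1) hi (by omega)).1
        have h4 := (ih p i (j + 1) hi (by omega)).1
        unfold nbrAvg; linarith
      have hnbrM : nbrAvg (u k l) i j ≤ M l := by
        have h1 := (ih l (i - 1) j (by omega) hj).2
        have h2 := (ih l (i + 1) j (by omega) hj).2
        have h3 := (ih l i (j - 1) hi (by omega)).2
        have h4 := (ih l i (j + 1) hi (by omega)).2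
        unfold nbrAvg; linarith
      refine ⟨le_max_right _ _, max_le ?_ (hM0 l)⟩
      have hfnn : 0 ≤ f l (u k l i j) * h ^ 2 :=
        mul_nonneg (hf l _ (ih l i j hi hj).1) (sq_nonneg h)
      have hsum : 0 ≤ ∑ p ∈ Finset.univ \ {l}, nbrAvg (u k p) i j :=
        Finset.sum_nonneg fun p _ => hnbr0 p
      linarith
end

section
/- Let m ≥ 2, let f_l : ℝ → ℝ (l = 1,...,m) be nondecreasing functions with f_l(0) = 0 and f_l ≥ 0 on [0,∞). Suppose (u¹,...,uᵐ) and (v¹,...,vᵐ) are two m-tuples of nonnegative grid functions on a 1D uniform grid, vanishing at the boundary, each tuple pointwise segregated (u^p_α · u^q_α = 0 for p ≠ q, same for v), and both satisfying at every interior point α, for all l: L_h û^l_α = f_l(u^l_α) whenever u^l_α > 0, and L_h û^l_α ≤ f_l(u^l_α) whenever u^l_α = 0 (same for v), where û^l = u^l - ∑_{j≠l} u^j. Then for each l, max_α (û^l_α - v̂^l_α) = max over the set {α : u^l_α ≤ v^l_α} of (û^l_α - v̂^l_α). -/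
/-- The "hat" combination `û^l = u^l - ∑_{j ≠ l} u^j`. -/
noncomputable def hatFn {m : ℕ} (u : Fin m → ℕ → ℝ) (l : Fin m) (α : ℕ) : ℝ :=
  u l α - ∑ j ∈ Finset.univ \ {l}, u j α

/-- One-dimensional discrete Laplacian with step `h`. -/
noncomputable def lap1 (h : ℝ) (w : ℕ → ℝ) (i : ℕ) : ℝ :=
  (w (i - 1) - 2 * w i + w (i + 1)) / h ^ 2

open Classical in
theorem stmt_11 (m N : ℕ) (hm : 2 ≤ m) (hN : 2 ≤ N) (h : ℝ) (hh : 0 < h)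
    (f : Fin m → ℝ → ℝ) (hfmono : ∀ l, Monotone (f l)) (hf0 : ∀ l, f l 0 = 0)
    (hfpos : ∀ l s, 0 ≤ s → 0 ≤ f l s)
    (u v : Fin m → ℕ → ℝ)
    (hupos : ∀ l α, α ≤ N → 0 ≤ u l α) (hvpos : ∀ l α, α ≤ N → 0 ≤ v l α)
    (hu0 : ∀ l, u l 0 = 0) (huN : ∀ l, u l N = 0)
    (hv0 : ∀ l, v l 0 = 0) (hvN : ∀ l, v l N = 0)
    (huseg : ∀ p q α, α ≤ N → p ≠ q → u p α * u q α = 0)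
    (hvseg : ∀ p q α, α ≤ N → p ≠ q → v p α * v q α = 0)
    (hueq : ∀ l α, 1 ≤ α → α < N → 0 < u l α → lap1 h (hatFn u l) α = f l (u l α))
    (hule : ∀ l α, 1 ≤ α → α < N → u l α = 0 → lap1 h (hatFn u l) α ≤ f l (u l α))
    (hveq : ∀ l α, 1 ≤ α → α < N → 0 < v l α → lap1 h (hatFn v l) α = f l (v l α))
    (hvle : ∀ l α, 1 ≤ α → α < N → v l α = 0 → lap1 h (hatFn v l) α ≤ f l (v l α)) :
    ∀ l : Fin m,
      (Finset.Icc 0 N).sup' ⟨0, by simp⟩ (fun α => hatFn u l α - hatFn v l α) =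
      ((Finset.Icc 0 N).filter (fun α => u l α ≤ v l α)).sup'
        ⟨0, by simp [Finset.mem_filter, hu0 l, hv0 l]⟩
        (fun α => hatFn u l α - hatFn v l α) := by

  intro l
  set w : ℕ → ℝ := fun α => hatFn u l α - hatFn v l α with hwdef
  have hS0 : (0:ℕ) ∈ (Finset.Icc 0 N).filter (fun α => u l α ≤ v l α) := by
    simp [Finset.mem_filter, hu0 l, hv0 l]
  set S := (Finset.Icc 0 N).filter (fun α => u l α ≤ v l α) with hSdef
  set M := (Finset.Icc 0 N).sup' ⟨0, by simp⟩ w with hMdef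
  have hwleM : ∀ α, α ≤ N → w α ≤ M := fun α hα =>
    Finset.le_sup' w (by simp [Finset.mem_Icc, hα])
  have huhat : ∀ α, α ≤ N → 0 < u l α → hatFn u l α = u l α := by
    intro α hα hpos
    have : ∑ j ∈ Finset.univ \ {l}, u j α = 0 := by
      apply Finset.sum_eq_zero
      intro j hj
      have hjl : j ≠ l := by simpa using (Finset.mem_sdiff.mp hj).2
      have := huseg l j α hα (Ne.symm hjl)
      rcases mul_eq_zero.mp this with h1 | h1
      · exact absurd h1 (ne_of_gt hpos)
      · exact h1
    simp [hatFn, this]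
  have key : ∀ α, α ≤ N → w α = M → M ≤ S.sup' ⟨0, hS0⟩ w := by
    intro α
    induction α using Nat.strong_induction_on with
    | _ α ih =>
      intro hαN hwα
      by_cases hcase : u l α ≤ v l α
      · have hmem : α ∈ S := by
          simp [hSdef, Finset.mem_filter, Finset.mem_Icc, hαN, hcase]
        rw [← hwα]
        exact Finset.le_sup' w hmem
      · have hvu : v l α < u l α := lt_of_not_ge hcase
        have hupos' : 0 < u l α := lt_of_le_of_lt (hvpos l α hαN) hvu
        have hα1 : 1 ≤ α := by
          rcases Nat.eq_zero_or_pos α with h0 | h0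
          · exfalso; rw [h0, hu0 l] at hupos'; exact lt_irrefl _ hupos'
          · exact h0
        have hαN' : α < N := by
          rcases lt_or_eq_of_le hαN with h0 | h0
          · exact h0
          · exfalso; rw [h0, huN l] at hupos'; exact lt_irrefl _ hupos'
        have hA : lap1 h (hatFn u l) α = f l (u l α) := hueq l α hα1 hαN' hupos'
        have hB : lap1 h (hatFn v l) α ≤ f l (v l α) := by
          rcases lt_or_eq_of_le (hvpos l α hαN) with h0 | h0
          · exact le_of_eq (hveq l α hα1 hαN' h0)
          · exact hvle l α hα1 hαN' h0.symm
        have hBA : lap1 h (hatFn v l) α ≤ lap1 h (hatFn u l) α := by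
          rw [hA]; exact hB.trans (hfmono l hvu.le)
        have h2 : (0:ℝ) < h ^ 2 := by positivity
        have hineq : hatFn v l (α-1) - 2 * hatFn v l α + hatFn v l (α+1) ≤
            hatFn u l (α-1) - 2 * hatFn u l α + hatFn u l (α+1) := by
          unfold lap1 at hBA
          exact (div_le_div_iff_of_pos_right h2).mp hBA
        have hm1 : w (α-1) ≤ M := hwleM (α-1) (by omega)
        have hp1 : w (α+1) ≤ M := hwleM (α+1) (by omega)
        have hwα' : w α = M := hwα
        have hweq : w (α-1) = M := by
          simp only [hwdef] at hm1 hp1 hwα' ⊢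
          linarith
        exact ih (α-1) (by omega) (by omega) hweq
  apply le_antisymm
  · obtain ⟨α₀, hα₀, hMeq⟩ := Finset.exists_mem_eq_sup' (⟨0, by simp⟩ :
      (Finset.Icc 0 N).Nonempty) w
    exact key α₀ (by simpa [Finset.mem_Icc] using hα₀) hMeq.symm
  · exact Finset.sup'_le _ _ fun b hb => hwleM b
      (Finset.mem_Icc.mp (Finset.mem_filter.mp hb).1).2
end

section
/- Fix h > 0, K ∈ ℕ, and nondecreasing f₁, f₂ : ℝ → ℝ. Define F : ℝ × ℝᴷ → ℝ by F(u, d) = min( (∑_j d_j)/h² + f₁(u), max( (∑_j d_j)/h² - f₂(-u), u ) ), where d_j represents the difference u_i - u_{i_j} with the j-th neighbour. Then F is nondecreasing in u and nondecreasing in each d_j; i.e., the scheme is degenerate elliptic in the sense of Oberman. -/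
theorem stmt_17 (K : ℕ) (h : ℝ) (hh : 0 < h)
    (f₁ f₂ : ℝ → ℝ) (hf₁ : Monotone f₁) (hf₂ : Monotone f₂) :
    (∀ d : Fin K → ℝ, Monotone (fun u : ℝ =>
      min ((∑ j, d j) / h ^ 2 + f₁ u) (max ((∑ j, d j) / h ^ 2 - f₂ (-u)) u))) ∧
    (∀ u : ℝ, Monotone (fun d : Fin K → ℝ =>
      min ((∑ j, d j) / h ^ 2 + f₁ u) (max ((∑ j, d j) / h ^ 2 - f₂ (-u)) u))) := by
  constructor
  · intro d u v huv
    have h1 : f₁ u ≤ f₁ v := hf₁ huv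
    have h2 : f₂ (-v) ≤ f₂ (-u) := hf₂ (by linarith)
    exact min_le_min (by linarith) (max_le_max (by linarith) huv)
  · intro u d e hde
    have hs : (∑ j, d j) ≤ ∑ j, e j := Finset.sum_le_sum fun j _ => hde j
    have hs' : (∑ j, d j) / h ^ 2 ≤ (∑ j, e j) / h ^ 2 :=
      div_le_div_of_nonneg_right hs (by positivity) |>.trans_eq rfl
    exact min_le_min (by linarith) (max_le_max (by linarith) le_rfl)
end
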